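/- In any transposition shuffle S = (a_i, b_i, p_i)_{i=1}^ℓ of order n, the number of indices i with p_i = 1/2 is at least n - 1. -/

import Mathlib

set_option maxHeartbeats 1000000
set_option synthInstance.maxHeartbeats 400000

open Finset

/-- The random permutation determined by outcomes `ω`: the composition `s₁ ∘ s₂ ∘ ⋯ ∘ s_ℓ`,
where `sᵢ` is the transposition swapping `a i` and `b i` if `ω i = true` and the identity
otherwise (convention `(σ * τ) x = σ (τ x)`). -/
def lazyPerm {n ℓ : ℕ} (a b : Fin ℓ → Fin n) (ω : Fin ℓ → Bool) : Equiv.Perm (Fin n) :=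
  (List.ofFn fun i => if ω i then Equiv.swap (a i) (b i) else 1).prod

/-- The weight `∏ᵢ pᵢ^{ωᵢ} (1-pᵢ)^{1-ωᵢ}` of an outcome `ω`. -/
def lazyWeight {ℓ : ℕ} (p : Fin ℓ → ℝ) (ω : Fin ℓ → Bool) : ℝ :=
  ∏ i, if ω i then p i else 1 - p i

/-- `(aᵢ, bᵢ, pᵢ)ᵢ` is a transposition shuffle of order `n`: a lazy transposition sequence
(`aᵢ ≠ bᵢ`, `pᵢ ∈ [0,1]`) such that the induced distribution on `Sₙ` is uniform. -/
def IsTranspositionShuffle (n ℓ : ℕ) (a b : Fin ℓ → Fin n) (p : Fin ℓ → ℝ) : Prop :=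
  (∀ i, a i ≠ b i) ∧ (∀ i, 0 ≤ p i ∧ p i ≤ 1) ∧
    ∀ α : Equiv.Perm (Fin n),
      ∑ ω ∈ univ.filter fun ω : Fin ℓ → Bool => lazyPerm a b ω = α,
        lazyWeight p ω = 1 / (n.factorial : ℝ)

namespace ShuffleHalf

open LinearMap Module

/-- The linear action of a permutation on `Fin n → ℝ`, as an endomorphism. -/
noncomputable def Φ {n : ℕ} (σ : Equiv.Perm (Fin n)) : Module.End ℝ (Fin n → ℝ) :=
  LinearMap.funLeft ℝ ℝ ⇑σ⁻¹

@[simp] lemma Φ_apply {n : ℕ} (σ : Equiv.Perm (Fin n)) (v : Fin n → ℝ) (j : Fin n) :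
    Φ σ v j = v (σ⁻¹ j) := rfl

lemma Φ_one {n : ℕ} : Φ (1 : Equiv.Perm (Fin n)) = 1 := by
  ext v j; simp [Φ]

lemma Φ_mul {n : ℕ} (σ τ : Equiv.Perm (Fin n)) : Φ (σ * τ) = Φ σ * Φ τ := by
  ext v j
  simp [Φ, Module.End.mul_apply, mul_inv_rev]

/-- The endomorphism corresponding to one lazy transposition step. -/
noncomputable def F {n : ℕ} (c d : Fin n) (q : ℝ) : Module.End ℝ (Fin n → ℝ) :=
  (1 - q) • 1 + q • Φ (Equiv.swap c d)

lemma F_apply {n : ℕ} (c d : Fin n) (q : ℝ) (v : Fin n → ℝ) (j : Fin n) :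
    F c d q v j = (1 - q) * v j + q * v (Equiv.swap c d j) := by
  simp [F, Equiv.swap_inv]

/-- The fundamental identity: the expected permutation operator is the product of the
one-step operators. -/
lemma sum_eq_prod (n : ℕ) : ∀ (ℓ : ℕ) (a b : Fin ℓ → Fin n) (p : Fin ℓ → ℝ),
    (∑ ω : Fin ℓ → Bool, lazyWeight p ω • Φ (lazyPerm a b ω))
      = (List.ofFn fun i => F (a i) (b i) (p i)).prod
  | 0, a, b, p => by
    simp [lazyWeight, lazyPerm, Φ_one]
  | (ℓ + 1), a, b, p => by
    have hw : ∀ (x : Bool) (ω' : Fin ℓ → Bool),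
        lazyWeight p (Fin.cons x ω')
          = (if x then p 0 else 1 - p 0) * lazyWeight (p ∘ Fin.succ) ω' := by
      intro x ω'
      unfold lazyWeight
      rw [Fin.prod_univ_succ]
      simp [Function.comp]
    have hπ : ∀ (x : Bool) (ω' : Fin ℓ → Bool),
        lazyPerm a b (Fin.cons x ω')
          = (if x then Equiv.swap (a 0) (b 0) else 1)
              * lazyPerm (a ∘ Fin.succ) (b ∘ Fin.succ) ω' := by
      intro x ω'
      unfold lazyPerm
      rw [List.ofFn_succ, List.prod_cons]
      simp [Function.comp]
    have hsum := Equiv.sum_comp (Fin.consEquiv fun _ : Fin (ℓ + 1) => Bool)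
      (fun ω => lazyWeight p ω • Φ (lazyPerm a b ω))
    rw [← hsum, Fintype.sum_prod_type]
    have hmul : ∀ (c : ℝ) (A : Module.End ℝ (Fin n → ℝ)),
        (c • A) * (∑ ω' : Fin ℓ → Bool,
            lazyWeight (p ∘ Fin.succ) ω' • Φ (lazyPerm (a ∘ Fin.succ) (b ∘ Fin.succ) ω'))
          = ∑ ω' : Fin ℓ → Bool, (c * lazyWeight (p ∘ Fin.succ) ω')
              • (A * Φ (lazyPerm (a ∘ Fin.succ) (b ∘ Fin.succ) ω')) := by
      intro c A
      rw [Finset.mul_sum]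
      exact Finset.sum_congr rfl fun ω' _ => smul_mul_smul_comm c A _ _
    have ih := sum_eq_prod n ℓ (a ∘ Fin.succ) (b ∘ Fin.succ) (p ∘ Fin.succ)
    simp only [Function.comp_apply] at ih
    rw [List.ofFn_succ, List.prod_cons, ← ih]
    rw [Fintype.sum_bool]
    have hF : F (a 0) (b 0) (p 0)
        = p 0 • Φ (Equiv.swap (a 0) (b 0)) + (1 - p 0) • (1 : Module.End ℝ (Fin n → ℝ)) := by
      rw [F, add_comm]
    rw [hF, add_mul, hmul, hmul]
    have hce : ∀ (x : Bool) (ω' : Fin ℓ → Bool),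
        (Fin.consEquiv fun _ : Fin (ℓ + 1) => Bool) (x, ω') = Fin.cons x ω' := fun _ _ => rfl
    congr 1 <;>
    · refine Finset.sum_congr rfl fun ω' _ => ?_
      simp [hce, hw, hπ, Φ_mul, Φ_one]

variable {n : ℕ}

/-- A "Sylvester-type" inequality: composing with `f` decreases the rank by at most
the nullity of `f`. -/
lemma rank_le_rank_comp_add_nullity [FiniteDimensional ℝ (Fin n → ℝ)]
    (f g : Module.End ℝ (Fin n → ℝ)) :
    finrank ℝ (LinearMap.range g)
      ≤ finrank ℝ (LinearMap.range (f * g)) + finrank ℝ (LinearMap.ker f) := by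
  have hrn := LinearMap.finrank_range_add_finrank_ker (f.domRestrict (LinearMap.range g))
  have hrange : LinearMap.range (f.domRestrict (LinearMap.range g))
      = LinearMap.range (f * g) := by
    rw [LinearMap.range_domRestrict]
    exact (LinearMap.range_comp g f).symm
  -- the kernel of the restriction embeds into the kernel of `f`
  have hker : finrank ℝ (LinearMap.ker (f.domRestrict (LinearMap.range g)))
      ≤ finrank ℝ (LinearMap.ker f) := by
    rw [← Submodule.finrank_map_subtype_eq (LinearMap.range g)
      (LinearMap.ker (f.domRestrict (LinearMap.range g)))]
    refine Submodule.finrank_mono ?_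
    rintro x hx
    rw [Submodule.mem_map] at hx
    obtain ⟨y, hy, rfl⟩ := hx
    rw [LinearMap.mem_ker] at hy ⊢
    simpa [LinearMap.domRestrict_apply] using hy
  have hfr : finrank ℝ (LinearMap.range g)
      = finrank ℝ (LinearMap.range (f * g))
        + finrank ℝ (LinearMap.ker (f.domRestrict (LinearMap.range g))) := by
    rw [← hrange, hrn]
  omega

/-- Iterated Sylvester bound over a list of endomorphisms. -/
lemma finrank_le_rank_prod_add_sum (L : List (Module.End ℝ (Fin n → ℝ))) :
    finrank ℝ (Fin n → ℝ)
      ≤ finrank ℝ (LinearMap.range L.prod)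
        + (L.map fun f => finrank ℝ (LinearMap.ker f)).sum := by
  induction L with
  | nil =>
    have h1 : LinearMap.range (1 : Module.End ℝ (Fin n → ℝ)) = ⊤ :=
      LinearMap.range_eq_top.mpr fun x => ⟨x, rfl⟩
    rw [List.prod_nil, h1]
    simp [finrank_top]
  | cons f t ih =>
    have h := rank_le_rank_comp_add_nullity f t.prod
    simp only [List.prod_cons, List.map_cons, List.sum_cons]
    exact le_trans ih (le_trans (Nat.add_le_add_right h _) (add_assoc _ _ _).le)

/-- Nullity of a step operator is at most 1. -/
lemma nullity_F_le_one (c d : Fin n) (q : ℝ) (hcd : c ≠ d) :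
    finrank ℝ (LinearMap.ker (F c d q)) ≤ 1 := by
  rcases eq_or_ne q 0 with hq | hq
  · have : LinearMap.ker (F c d q) = ⊥ := by
      rw [LinearMap.ker_eq_bot']
      intro v hv
      funext j
      have := congrFun hv j
      rw [F_apply] at this
      simpa [hq] using this
    rw [this, finrank_bot]
    omega
  · -- evaluation at `c` is injective on the kernel
    let φ : LinearMap.ker (F c d q) →ₗ[ℝ] ℝ :=
      (LinearMap.proj c).comp (LinearMap.ker (F c d q)).subtype
    have hinj : Function.Injective φ := by
      intro x y hxy
      have hker : ∀ v : Fin n → ℝ, F c d q v = 0 → v c = 0 → v = 0 := by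
        intro v hv hvc
        have heq : ∀ j, (1 - q) * v j + q * v (Equiv.swap c d j) = 0 := by
          intro j
          have := congrFun hv j
          rwa [F_apply] at this
        have hvd : v d = 0 := by
          have := heq c
          rw [Equiv.swap_apply_left, hvc] at this
          have : q * v d = 0 := by linarith
          rcases mul_eq_zero.mp this with h | h
          · exact absurd h hq
          · exact h
        funext j
        rcases eq_or_ne j c with rfl | hjc
        · exact hvc
        rcases eq_or_ne j d with rfl | hjd
        · exact hvd
        · have := heq j
          rw [Equiv.swap_apply_of_ne_of_ne hjc hjd] at this
          have : v j = 0 := by linarith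
          exact this
      suffices hs : ∀ z : LinearMap.ker (F c d q), φ z = 0 → z = 0 by
        have := sub_eq_zero.mpr hxy
        rw [← map_sub] at this
        have := hs (x - y) this
        exact sub_eq_zero.mp this
      rintro ⟨v, hv⟩ hz
      have hv0 : F c d q v = 0 := hv
      have hvc : v c = 0 := hz
      exact Subtype.ext (hker v hv0 hvc)
    have := LinearMap.finrank_le_finrank_of_injective hinj
    simpa using this
  
/-- If `q ≠ 1/2` the step operator is injective. -/
lemma nullity_F_eq_zero (c d : Fin n) (q : ℝ) (hq : q ≠ 1 / 2) :
    finrank ℝ (LinearMap.ker (F c d q)) = 0 := by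
  have hker : LinearMap.ker (F c d q) = ⊥ := by
    rw [LinearMap.ker_eq_bot']
    intro v hv
    have heq : ∀ j, (1 - q) * v j + q * v (Equiv.swap c d j) = 0 := by
      intro j
      have := congrFun hv j
      rwa [F_apply] at this
    have h2q : (1 : ℝ) - 2 * q ≠ 0 := by
      intro h; apply hq; linarith
    have hc := heq c
    have hd := heq d
    rw [Equiv.swap_apply_left] at hc
    rw [Equiv.swap_apply_right] at hd
    have hsum : v c + v d = 0 := by linarith
    have hdiff : (1 - 2 * q) * (v c - v d) = 0 := by ring_nf; ring_nf at hc hd; linarith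
    have hcd : v c - v d = 0 := by
      rcases mul_eq_zero.mp hdiff with h | h
      · exact absurd h h2q
      · exact h
    have hvc : v c = 0 := by linarith
    have hvd : v d = 0 := by linarith
    funext j
    rcases eq_or_ne j c with rfl | hjc
    · exact hvc
    rcases eq_or_ne j d with rfl | hjd
    · exact hvd
    · have := heq j
      rw [Equiv.swap_apply_of_ne_of_ne hjc hjd] at this
      have : v j = 0 := by linarith
      exact this
  rw [hker, finrank_bot]

/-- The range of the expected permutation operator is contained in the constants. -/
lemma range_S_le (ℓ : ℕ) (a b : Fin ℓ → Fin n) (p : Fin ℓ → ℝ) (c : ℝ)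
    (hunif : ∀ α : Equiv.Perm (Fin n),
      ∑ ω ∈ univ.filter fun ω : Fin ℓ → Bool => lazyPerm a b ω = α, lazyWeight p ω = c) :
    finrank ℝ (LinearMap.range
      (∑ ω : Fin ℓ → Bool, lazyWeight p ω • Φ (lazyPerm a b ω))) ≤ 1 := by
  classical
  set S : Module.End ℝ (Fin n → ℝ) :=
    ∑ ω : Fin ℓ → Bool, lazyWeight p ω • Φ (lazyPerm a b ω) with hS
  have hgroup : S = c • ∑ α : Equiv.Perm (Fin n), Φ α := by
    rw [hS, Finset.smul_sum]
    rw [← Finset.sum_fiberwise_of_maps_to (g := fun ω => lazyPerm a b ω)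
      (fun ω _ => Finset.mem_univ _) (fun ω => lazyWeight p ω • Φ (lazyPerm a b ω))]
    refine Finset.sum_congr rfl fun α _ => ?_
    have : ∀ ω ∈ univ.filter fun ω : Fin ℓ → Bool => lazyPerm a b ω = α,
        lazyWeight p ω • Φ (lazyPerm a b ω) = lazyWeight p ω • Φ α := by
      intro ω hω
      rw [Finset.mem_filter] at hω
      rw [hω.2]
    rw [Finset.sum_congr rfl this, ← Finset.sum_smul, hunif α]
  have hconst : ∀ v : Fin n → ℝ, ∀ j j' : Fin n, S v j = S v j' := by
    intro v j j'
    rw [hgroup]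
    simp only [LinearMap.smul_apply, Pi.smul_apply, LinearMap.sum_apply, Finset.sum_apply]
    congr 1
    simp only [Φ_apply]
    exact Fintype.sum_equiv (Equiv.mulLeft (Equiv.swap j j'))
      (fun α => v (α⁻¹ j)) (fun α => v (α⁻¹ j')) (by
        intro α
        simp [mul_inv_rev, Equiv.swap_apply_left])
  have hrange : LinearMap.range S ≤ Submodule.span ℝ {(fun _ => (1 : ℝ) : Fin n → ℝ)} := by
    rintro x ⟨v, rfl⟩
    rcases Nat.eq_zero_or_pos n with hn | hn
    · have : S v = 0 := by
        funext j
        exact absurd j.2 (by omega)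
      rw [this]; exact Submodule.zero_mem _
    · have j0 : Fin n := ⟨0, hn⟩
      have : S v = (S v j0) • (fun _ => (1 : ℝ)) := by
        funext j
        simp [hconst v j j0]
      rw [this]
      exact Submodule.smul_mem _ _ (Submodule.mem_span_singleton_self _)
  calc finrank ℝ (LinearMap.range S)
      ≤ finrank ℝ (Submodule.span ℝ {(fun _ => (1 : ℝ) : Fin n → ℝ)}) :=
        Submodule.finrank_mono hrange
    _ ≤ 1 := by
        have := finrank_span_le_card (R := ℝ) ({(fun _ => (1 : ℝ) : Fin n → ℝ)} : Set (Fin n → ℝ))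
        simpa using this

end ShuffleHalf

/-- in any transposition shuffle of order `n`, the number of indices `i`
with `pᵢ = 1/2` is at least `n - 1`. -/
theorem shuffle_count_half (n ℓ : ℕ) (a b : Fin ℓ → Fin n) (p : Fin ℓ → ℝ)
    (h : IsTranspositionShuffle n ℓ a b p) :
    n - 1 ≤ (univ.filter fun i : Fin ℓ => p i = 1 / 2).card := by
  classical
  obtain ⟨hab, _hp01, hunif⟩ := h
  open ShuffleHalf Module in
  have hprod : (∑ ω : Fin ℓ → Bool, lazyWeight p ω • ShuffleHalf.Φ (lazyPerm a b ω))
      = (List.ofFn fun i => ShuffleHalf.F (a i) (b i) (p i)).prod :=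
    ShuffleHalf.sum_eq_prod n ℓ a b p
  have hrank1 : Module.finrank ℝ (LinearMap.range
      (List.ofFn fun i => ShuffleHalf.F (a i) (b i) (p i)).prod) ≤ 1 := by
    rw [← hprod]
    exact ShuffleHalf.range_S_le ℓ a b p (1 / (n.factorial : ℝ)) hunif
  have hlist := ShuffleHalf.finrank_le_rank_prod_add_sum
    (List.ofFn fun i => ShuffleHalf.F (a i) (b i) (p i))
  have hn : Module.finrank ℝ (Fin n → ℝ) = n := by
    rw [Module.finrank_pi]; simp
  have hsum : ((List.ofFn fun i => ShuffleHalf.F (a i) (b i) (p i)).map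
      fun f => Module.finrank ℝ (LinearMap.ker f)).sum
      = ∑ i : Fin ℓ, Module.finrank ℝ (LinearMap.ker (ShuffleHalf.F (a i) (b i) (p i))) := by
    rw [List.map_ofFn, List.sum_ofFn]
    rfl
  have hbound : ∑ i : Fin ℓ, Module.finrank ℝ (LinearMap.ker (ShuffleHalf.F (a i) (b i) (p i)))
      ≤ (univ.filter fun i : Fin ℓ => p i = 1 / 2).card := by
    rw [Finset.card_filter]
    refine Finset.sum_le_sum fun i _ => ?_
    rcases eq_or_ne (p i) (1 / 2) with hp | hp
    · rw [if_pos hp]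
      exact ShuffleHalf.nullity_F_le_one (a i) (b i) (p i) (hab i)
    · rw [if_neg hp, ShuffleHalf.nullity_F_eq_zero (a i) (b i) (p i) hp]
  rw [hn, hsum] at hlist
  omega
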